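/- arXiv:1409.4640 — 2 statements merged into one kernel-verified Lean document; each statement's English description precedes it below -/
import Mathlib

section
/- Let $f(z) = a_0 + a_1 z + \cdots + a_d z^d$ be a polynomial with real coefficients, $d \ge 2$, $a_0 > 0$ and $a_d > 0$. If there exists a positive integer $m$ such that all coefficients $0,1,\dots,md$ of $f^m$ are strictly positive, then $|f(z)| < f(|z|)$ for every complex $z \notin [0,\infty)$, and $a_1 > 0$ and $a_{d-1} > 0$. -/
open Polynomial

lemma coeff_one_mul'' (p q : ℝ[X]) :
    (p*q).coeff 1 = p.coeff 0 * q.coeff 1 + p.coeff 1 * q.coeff 0 := by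
  rw [Polynomial.coeff_mul]
  rw [show (Finset.HasAntidiagonal.antidiagonal 1 : Finset (ℕ × ℕ)) = {(0,1),(1,0)} from rfl]
  simp

lemma coeff_one_pow' (p : ℝ[X]) (m : ℕ) (hm : 0 < m) :
    (p ^ m).coeff 1 = m * p.coeff 0 ^ (m - 1) * p.coeff 1 := by
  induction m with
  | zero => omega
  | succ n ih =>
    rcases Nat.eq_zero_or_pos n with h | h
    · subst h; simp
    · rw [pow_succ, coeff_one_mul'', ih h]
      have h0 : (p ^ n).coeff 0 = p.coeff 0 ^ n := by
        simp [← Polynomial.constantCoeff_apply, map_pow]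
      have key : p.coeff 0 ^ (n-1) * p.coeff 0 = p.coeff 0 ^ n := by
        rw [← pow_succ]; congr 1; omega
      rw [h0]
      push_cast [Nat.add_sub_cancel]
      linear_combination ((n:ℝ) * p.coeff 1) * key

lemma reverse_pow' (p : ℝ[X]) (m : ℕ) : (p^m).reverse = p.reverse ^ m := by
  induction m with
  | zero =>
    rw [pow_zero, pow_zero, ← Polynomial.C_1, Polynomial.reverse_C]
  | succ n ih => rw [pow_succ, pow_succ, Polynomial.reverse_mul_of_domain, ih]

lemma eval_pos_of_coeff_pos' (p : ℝ[X]) (hp : ∀ k ≤ p.natDegree, 0 < p.coeff k)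
    (r : ℝ) (hr : 0 ≤ r) : 0 < p.eval r := by
  rw [Polynomial.eval_eq_sum_range]
  apply Finset.sum_pos'
  · intro i hi
    exact mul_nonneg (le_of_lt (hp i (Nat.lt_succ_iff.mp (Finset.mem_range.mp hi))))
      (pow_nonneg hr i)
  · exact ⟨0, Finset.mem_range.mpr (Nat.succ_pos _), by simpa using hp 0 (Nat.zero_le _)⟩

lemma strict_tri' (z : ℂ) (hz : z.re < ‖z‖) (a b : ℝ) (ha : 0 < a) (hb : 0 < b) :
    ‖(↑a + ↑b * z : ℂ)‖ < a + b * ‖z‖ := by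
  set r := ‖z‖ with hr
  have hsq : z.re ^ 2 + z.im ^ 2 = r ^ 2 := by
    rw [hr, Complex.sq_norm, Complex.normSq_apply]; ring
  have h2 : b^2 * (z.re^2 + z.im^2) = b^2 * r^2 := by rw [hsq]
  have hr0 : 0 ≤ r := norm_nonneg z
  have hrhs : 0 ≤ a + b * r := by positivity
  refine lt_of_pow_lt_pow_left₀ 2 hrhs ?_
  rw [Complex.sq_norm, Complex.normSq_apply]
  simp only [Complex.add_re, Complex.add_im, Complex.ofReal_re, Complex.ofReal_im,
    Complex.mul_re, Complex.mul_im]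
  nlinarith [h2, mul_lt_mul_of_pos_left hz (mul_pos ha hb)]

lemma abs_aeval_lt' (g : ℝ[X]) (hn : 2 ≤ g.natDegree)
    (hc : ∀ k ≤ g.natDegree, 0 < g.coeff k)
    (z : ℂ) (hz : z.re < ‖z‖) :
    ‖Polynomial.aeval z g‖ < g.eval ‖z‖ := by
  set r := ‖z‖ with hrdef
  obtain ⟨k, hk⟩ : ∃ k, g.natDegree + 1 = k + 3 := ⟨g.natDegree - 2, by omega⟩
  have hA : Polynomial.aeval z g =
      (∑ i ∈ Finset.range (k+1), (g.coeff (i+2) : ℂ) * z ^ (i+2)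
        + (g.coeff 1 : ℂ) * z ^ 1) + (g.coeff 0 : ℂ) * z ^ 0 := by
    rw [Polynomial.aeval_def, Polynomial.eval₂_eq_sum_range, hk,
      Finset.sum_range_succ' _ (k+2), Finset.sum_range_succ' _ (k+1)]
    simp [Complex.coe_algebraMap]
  have hB : g.eval r =
      (∑ i ∈ Finset.range (k+1), g.coeff (i+2) * r ^ (i+2)
        + g.coeff 1 * r ^ 1) + g.coeff 0 * r ^ 0 := by
    rw [Polynomial.eval_eq_sum_range, hk,
      Finset.sum_range_succ' _ (k+2), Finset.sum_range_succ' _ (k+1)]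
  rw [hA, hB]
  set T : ℂ := ∑ i ∈ Finset.range (k+1), (g.coeff (i+2) : ℂ) * z ^ (i+2) with hT
  have step1 : ‖(T + (g.coeff 1 : ℂ) * z ^ 1) + (g.coeff 0 : ℂ) * z ^ 0‖
      ≤ ‖(g.coeff 0 : ℂ) * z ^ 0 + (g.coeff 1 : ℂ) * z ^ 1‖ + ‖T‖ := by
    have e : (T + (g.coeff 1 : ℂ) * z ^ 1) + (g.coeff 0 : ℂ) * z ^ 0
        = ((g.coeff 0 : ℂ) * z ^ 0 + (g.coeff 1 : ℂ) * z ^ 1) + T := by ring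
    rw [e]; exact norm_add_le _ _
  have step2 : ‖T‖ ≤ ∑ i ∈ Finset.range (k+1), g.coeff (i+2) * r ^ (i+2) := by
    refine (norm_sum_le _ _).trans_eq (Finset.sum_congr rfl ?_)
    intro i hi
    have hle : i + 2 ≤ g.natDegree := by
      have := Finset.mem_range.mp hi; omega
    rw [norm_mul, norm_pow, Complex.norm_real, Real.norm_eq_abs, abs_of_pos (hc _ hle), hrdef]
  have h01 : ‖(g.coeff 0 : ℂ) * z ^ 0 + (g.coeff 1 : ℂ) * z ^ 1‖
      < g.coeff 0 * r ^ 0 + g.coeff 1 * r ^ 1 := by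
    simpa using strict_tri' z hz _ _ (hc 0 (by omega)) (hc 1 (by omega))
  linarith

theorem deAngelis_necessity (f : Polynomial ℝ) (hd : 2 ≤ f.natDegree)
    (h0 : 0 < f.coeff 0) (hlead : 0 < f.coeff f.natDegree)
    (hm : ∃ m : ℕ, 0 < m ∧ ∀ k ≤ m * f.natDegree, 0 < (f ^ m).coeff k) :
    (∀ z : ℂ, z ∉ (Complex.ofReal '' Set.Ici (0 : ℝ)) →
      ‖Polynomial.aeval z f‖ < Polynomial.eval ‖z‖ f) ∧
    0 < f.coeff 1 ∧ 0 < f.coeff (f.natDegree - 1) := by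
  obtain ⟨m, hm0, hmpos⟩ := hm
  have hf0 : f ≠ 0 := fun h => by simp [h] at hlead
  have hdeg : (f ^ m).natDegree = m * f.natDegree := Polynomial.natDegree_pow f m
  have hmd : f.natDegree ≤ m * f.natDegree := Nat.le_mul_of_pos_left f.natDegree hm0
  have hcg : ∀ k ≤ (f ^ m).natDegree, 0 < (f ^ m).coeff k := by
    rw [hdeg]; exact hmpos
  have hgd : 2 ≤ (f ^ m).natDegree := by rw [hdeg]; omega
  -- positivity of f on [0, ∞)
  have hfne : ∀ s : ℝ, 0 ≤ s → f.eval s ≠ 0 := by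
    intro s hs h
    have := eval_pos_of_coeff_pos' (f ^ m) hcg s hs
    rw [Polynomial.eval_pow, h, zero_pow (by omega)] at this
    exact lt_irrefl 0 this
  have hfpos : ∀ s : ℝ, 0 ≤ s → 0 < f.eval s := by
    intro s hs
    by_contra hle
    push_neg at hle
    have hlt : f.eval s < 0 := lt_of_le_of_ne hle (hfne s hs)
    have h00 : 0 < f.eval 0 := by
      rwa [← Polynomial.coeff_zero_eq_eval_zero]
    obtain ⟨t, ht, hteq⟩ := intermediate_value_Icc' hs
      (f.continuousOn (s := Set.Icc 0 s)) ⟨le_of_lt hlt, le_of_lt h00⟩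
    exact hfne t ht.1 hteq
  refine ⟨?_, ?_, ?_⟩
  · intro z hz
    have hzre : z.re < ‖z‖ := by
      rcases lt_or_eq_of_le (Complex.re_le_norm z) with h | h
      · exact h
      · exfalso
        have habs : z.re^2 + z.im^2 = ‖z‖^2 := by
          rw [Complex.sq_norm, Complex.normSq_apply]; ring
        have hsq2 : z.re ^ 2 = ‖z‖ ^ 2 := by rw [h]
        have him2 : z.im ^ 2 = 0 := by linarith [habs, hsq2]
        have him : z.im = 0 := by
          have := sq_eq_zero_iff.mp him2
          simpa using this
        have hre : 0 ≤ z.re := h ▸ norm_nonneg z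
        exact hz ⟨z.re, hre, by apply Complex.ext <;> simp [him]⟩
    have key := abs_aeval_lt' (f ^ m) hgd hcg z hzre
    rw [map_pow, norm_pow, Polynomial.eval_pow] at key
    exact lt_of_pow_lt_pow_left₀ m (le_of_lt (hfpos _ (norm_nonneg z))) key
  · have h1 := hmpos 1 (by omega)
    rw [coeff_one_pow' f m hm0] at h1
    have hp : (0:ℝ) < m * f.coeff 0 ^ (m-1) := by positivity
    nlinarith [h1, hp]
  · have h1 := hmpos (m * f.natDegree - 1) (by omega)
    have e1 : (f.reverse ^ m).coeff 1 = (f ^ m).coeff (m * f.natDegree - 1) := by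
      rw [← reverse_pow', Polynomial.coeff_one_reverse,
        Polynomial.nextCoeff_of_natDegree_pos (by omega), hdeg]
    have e2 : f.reverse.coeff 0 = f.coeff f.natDegree := by
      rw [Polynomial.coeff_zero_reverse, Polynomial.leadingCoeff]
    have e3 : f.reverse.coeff 1 = f.coeff (f.natDegree - 1) := by
      rw [Polynomial.coeff_one_reverse, Polynomial.nextCoeff_of_natDegree_pos (by omega)]
    have h2 := coeff_one_pow' f.reverse m hm0
    rw [e1, e2, e3] at h2
    rw [h2] at h1
    have hp : (0:ℝ) < m * f.coeff f.natDegree ^ (m-1) := by positivity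
    nlinarith [h1, hp]
end

section
/- (Obrechkoff's inequality.) Let $f$ be a nonconstant polynomial with real, nonnegative coefficients, and let $N$ denote the number of nonzero roots of $f$ in $\mathbb{C}$, counted with multiplicity. Then for every $\alpha$ with $0 \le \alpha \le \pi/2$, the number of nonzero roots $z$ of $f$ (counted with multiplicity) satisfying $|\arg z| \le \alpha$ is at most $(2\alpha/\pi) \cdot N$. -/
open Polynomial

open Real Set MeasureTheory Filter

namespace Obre

noncomputable def Complex.abs : AbsoluteValue ℂ ℝ := NormedField.toAbsoluteValue ℂ

lemma Complex.abs_apply (z : ℂ) : Complex.abs z = ‖z‖ := rfl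

lemma Complex.abs_ofReal (r : ℝ) : Complex.abs (r : ℂ) = |r| := by
  rw [Complex.abs_apply, Complex.norm_real, Real.norm_eq_abs]

lemma Complex.abs_exp_ofReal_mul_I (x : ℝ) : Complex.abs (Complex.exp (x * Complex.I)) = 1 :=
  Complex.norm_exp_ofReal_mul_I x

lemma Complex.abs_mul_exp_arg_mul_I (x : ℂ) :
    (Complex.abs x : ℂ) * Complex.exp (Complex.arg x * Complex.I) = x :=
  Complex.norm_mul_exp_arg_mul_I x

lemma Complex.sq_abs (z : ℂ) : Complex.abs z ^ 2 = Complex.normSq z := Complex.sq_norm z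

lemma qform (s u : ℝ) : s^2 - 2*s*Real.cos u + 1 = (s - Real.cos u)^2 + (Real.sin u)^2 := by
  nlinarith [Real.sin_sq_add_cos_sq u]

lemma q_nonneg (s u : ℝ) : 0 ≤ s^2 - 2*s*Real.cos u + 1 := by
  rw [qform]; positivity

lemma q_pos {s u : ℝ} (hs : 0 < s) (hu : 0 ≤ u) (hu' : u ≤ π) (h : u ≠ 0 ∨ s ≠ 1) :
    0 < s^2 - 2*s*Real.cos u + 1 := by
  rw [qform]
  rcases eq_or_lt_of_le hu with h0 | h0
  · rcases h with h | h
    · exact absurd h0.symm h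
    · rw [← h0]
      simp only [Real.cos_zero, Real.sin_zero]
      have : s - 1 ≠ 0 := sub_ne_zero.2 h
      positivity
  · rcases eq_or_lt_of_le hu' with h1 | h1
    · rw [h1]
      simp only [Real.cos_pi, Real.sin_pi]
      nlinarith
    · have : 0 < Real.sin u := Real.sin_pos_of_pos_of_lt_pi h0 h1
      positivity

lemma arctan_cot {u : ℝ} (hu : 0 < u) (hu' : u < π) :
    Real.arctan (Real.cos u / Real.sin u) = π/2 - u := by
  have : Real.cos u / Real.sin u = Real.tan (π/2 - u) := by
    rw [Real.tan_pi_div_two_sub, Real.tan_eq_sin_div_cos, inv_div]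
  rw [this, Real.arctan_tan (by linarith) (by linarith)]

lemma inner_int {u : ℝ} (hu : 0 < u) (hu' : u < π) :
    IntegrableOn (fun s => Real.sin u / (s^2 - 2*s*Real.cos u + 1)) (Ioi 0) ∧
    ∫ s in Ioi 0, Real.sin u / (s^2 - 2*s*Real.cos u + 1) = π - u := by
  have hb : 0 < Real.sin u := Real.sin_pos_of_pos_of_lt_pi hu hu'
  set b := Real.sin u with hbdef
  set c := Real.cos u with hcdef
  set g : ℝ → ℝ := fun s => Real.arctan ((s - c)/b) with hg
  have hderiv : ∀ s : ℝ, HasDerivAt g (b / (s^2 - 2*s*c + 1)) s := by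
    intro s
    have h1 : HasDerivAt (fun s : ℝ => (s - c)/b) (1/b) s := by
      simpa using ((hasDerivAt_id s).sub_const c).div_const b
    have h2 := (Real.hasDerivAt_arctan ((s - c)/b)).comp s h1
    refine h2.congr_deriv ?_
    have hq : s^2 - 2*s*c + 1 = (s-c)^2 + b^2 := qform s u
    rw [hq]
    field_simp
    ring
  have hpos : ∀ s ∈ Ioi (0:ℝ), 0 ≤ b / (s^2 - 2*s*c + 1) := by
    intro s hs
    have := q_pos (u := u) hs (le_of_lt hu) (le_of_lt hu') (Or.inl hu.ne')
    positivity
  have htend : Tendsto g atTop (nhds (π/2)) := by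
    apply (Real.tendsto_arctan_atTop.mono_right nhdsWithin_le_nhds).comp
    apply Tendsto.atTop_div_const hb
    exact tendsto_atTop_add_const_right _ (-c) tendsto_id |>.congr
      (by intro x; simp [sub_eq_add_neg])
  have hcont : ContinuousWithinAt g (Ici 0) 0 := (hderiv 0).continuousAt.continuousWithinAt
  have hval := integral_Ioi_of_hasDerivAt_of_nonneg hcont (fun x _ => hderiv x) hpos htend
  have hint := integrableOn_Ioi_deriv_of_nonneg hcont (fun x _ => hderiv x) hpos htend
  have hg0 : g 0 = -(π/2 - u) := by
    rw [hg]
    simp only [zero_sub]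
    rw [neg_div, Real.arctan_neg, arctan_cot hu hu']
  exact ⟨hint, by rw [hval, hg0]; ring⟩

/-- The key kernel integral. -/
lemma W_int {θ : ℝ} (hθ0 : 0 ≤ θ) (hθπ : θ ≤ π) :
    IntegrableOn (fun s => (Real.log (s+1) - Real.log (s^2 - 2*s*Real.cos θ + 1)/2)/s) (Ioi 0) ∧
    ∫ s in Ioi 0, (Real.log (s+1) - Real.log (s^2 - 2*s*Real.cos θ + 1)/2)/s
      = (π - θ)^2/2 := by
  set h : ℝ → ℝ := fun s => (Real.log (s+1) - Real.log (s^2 - 2*s*Real.cos θ + 1)/2)/s with hh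
  set q : ℝ → ℝ → ℝ := fun s u => s^2 - 2*s*Real.cos u + 1 with hq
  -- FTC step
  have hftc : ∀ s : ℝ, 0 < s → (θ ≠ 0 ∨ s ≠ 1) →
      h s = ∫ u in Ioc θ π, Real.sin u / q s u := by
    intro s hs hcase
    have hqpos : ∀ u ∈ Icc θ π, 0 < q s u := by
      intro u hu
      refine q_pos hs (hθ0.trans hu.1) hu.2 ?_
      rcases hcase with h1 | h1
      · exact Or.inl (fun h0 => h1 (le_antisymm (h0 ▸ hu.1) hθ0))
      · exact Or.inr h1
    have hA : ∀ u ∈ Set.uIcc θ π, HasDerivAt (fun u => Real.log (q s u)/2)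
        (s * Real.sin u / q s u) u := by
      intro u hu
      rw [Set.uIcc_of_le hθπ] at hu
      have hd : HasDerivAt (fun u => q s u) (2*s*Real.sin u) u := by
        have : HasDerivAt (fun u : ℝ => s^2 - 2*s*Real.cos u + 1) (2*s*Real.sin u) u := by
          simpa using (((Real.hasDerivAt_cos u).const_mul (2*s)).const_sub (s^2)).add_const 1
        exact this
      have := (hd.log (hqpos u hu).ne').div_const 2
      refine this.congr_deriv ?_
      ring
    have hcont : ContinuousOn (fun u => s * Real.sin u / q s u) (Set.uIcc θ π) := by
      rw [Set.uIcc_of_le hθπ]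
      apply ContinuousOn.div
      · fun_prop
      · fun_prop
      · exact fun u hu => (hqpos u hu).ne'
    have := intervalIntegral.integral_eq_sub_of_hasDerivAt hA
      hcont.intervalIntegrable
    have hπval : q s π = (s+1)^2 := by simp [hq, Real.cos_pi]; ring
    have hlog : Real.log (q s π)/2 = Real.log (s+1) := by
      rw [hπval, Real.log_pow]
      push_cast
      ring
    -- ∫ u in θ..π, s*sin u/q s u = log(s+1) - log(q s θ)/2
    have key : ∫ u in θ..π, s * Real.sin u / q s u = Real.log (s+1) - Real.log (q s θ)/2 := by
      rw [this, hlog]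
    have key2 : ∫ u in θ..π, Real.sin u / q s u
        = (Real.log (s+1) - Real.log (q s θ)/2)/s := by
      have : ∀ u, Real.sin u / q s u = (1/s) * (s * Real.sin u / q s u) := by
        intro u; field_simp
      rw [intervalIntegral.integral_congr (fun u _ => this u)]
      rw [intervalIntegral.integral_const_mul, key]
      ring
    rw [hh]
    simp only
    rw [← key2, intervalIntegral.integral_of_le hθπ]
  -- measurability of the 2-variable kernel
  have hmeasF : Measurable (Function.uncurry (fun s u : ℝ => ENNReal.ofReal (Real.sin u / q s u))) := by
    apply ENNReal.measurable_ofReal.comp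
    apply Measurable.div
    · fun_prop
    · fun_prop
  set μ := volume.restrict (Ioi (0:ℝ)) with hμ
  set ν := volume.restrict (Ioc θ π) with hν
  have hswap : ∫⁻ s, ∫⁻ u, ENNReal.ofReal (Real.sin u / q s u) ∂ν ∂μ
      = ∫⁻ u, ∫⁻ s, ENNReal.ofReal (Real.sin u / q s u) ∂μ ∂ν :=
    MeasureTheory.lintegral_lintegral_swap hmeasF.aemeasurable
  -- right side value
  have hright : ∫⁻ u, ∫⁻ s, ENNReal.ofReal (Real.sin u / q s u) ∂μ ∂ν
      = ENNReal.ofReal ((π - θ)^2/2) := by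
    have h1 : ∀ u ∈ Ioc θ π, ∫⁻ s, ENNReal.ofReal (Real.sin u / q s u) ∂μ
        = ENNReal.ofReal (π - u) := by
      intro u hu
      rcases eq_or_lt_of_le hu.2 with h2 | h2
      · simp [h2, Real.sin_pi, hq]
      · have hi := inner_int (lt_of_le_of_lt hθ0 hu.1) h2
        rw [hμ, ← MeasureTheory.ofReal_integral_eq_lintegral_ofReal hi.1]
        · rw [hi.2]
        · filter_upwards [MeasureTheory.ae_restrict_mem measurableSet_Ioi] with s hs
          have hqp := q_pos (u := u) hs (hθ0.trans hu.1.le) hu.2 (Or.inl (lt_of_le_of_lt hθ0 hu.1).ne')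
          have hsin : 0 ≤ Real.sin u := Real.sin_nonneg_of_nonneg_of_le_pi (hθ0.trans hu.1.le) hu.2
          positivity
    rw [hν, MeasureTheory.setLIntegral_congr_fun measurableSet_Ioc
      h1]
    rw [← MeasureTheory.ofReal_integral_eq_lintegral_ofReal]
    · congr 1
      rw [← intervalIntegral.integral_of_le hθπ]
      have : ∫ u in θ..π, (π - u) = π * (π - θ) - (π^2 - θ^2)/2 := by
        rw [intervalIntegral.integral_sub intervalIntegrable_const intervalIntegral.intervalIntegrable_id]
        simp [integral_id]
        ring
      rw [this]; ring
    · exact (continuous_const.sub continuous_id).integrableOn_Ioc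
    · filter_upwards [MeasureTheory.ae_restrict_mem measurableSet_Ioc] with u hu
      simp only [Pi.zero_apply]
      linarith [hu.2]
  -- left side: a.e. identification
  have hae1 : ∀ᵐ s ∂μ, s ∈ Ioi (0:ℝ) ∧ s ≠ 1 := by
    have h2 : ∀ᵐ (s:ℝ), s ≠ 1 := by
      rw [MeasureTheory.ae_iff]
      have : {a : ℝ | ¬ a ≠ 1} = {1} := by ext a; simp
      rw [this]
      exact Real.volume_singleton
    exact (MeasureTheory.ae_restrict_mem measurableSet_Ioi).and
      (MeasureTheory.ae_restrict_of_ae h2)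
  have hleft : ∀ᵐ s ∂μ, ENNReal.ofReal (h s)
      = ∫⁻ u, ENNReal.ofReal (Real.sin u / q s u) ∂ν := by
    filter_upwards [hae1] with s hs
    obtain ⟨hs0, hs1⟩ := hs
    have hqpos : ∀ u ∈ Ioc θ π, 0 < q s u := fun u hu =>
      q_pos hs0 (hθ0.trans hu.1.le) hu.2 (Or.inr hs1)
    have hnn : ∀ u ∈ Ioc θ π, 0 ≤ Real.sin u / q s u := by
      intro u hu
      have := hqpos u hu
      have : 0 ≤ Real.sin u := Real.sin_nonneg_of_nonneg_of_le_pi (hθ0.trans hu.1.le) hu.2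
      positivity
    have hcont : ContinuousOn (fun u => Real.sin u / q s u) (Icc θ π) := by
      apply ContinuousOn.div
      · fun_prop
      · fun_prop
      · intro u hu
        exact (q_pos hs0 (hθ0.trans hu.1) hu.2 (Or.inr hs1)).ne'
    have hint : IntegrableOn (fun u => Real.sin u / q s u) (Ioc θ π) :=
      (hcont.integrableOn_Icc).mono_set Set.Ioc_subset_Icc_self
    rw [hftc s hs0 (Or.inr hs1), hν,
      MeasureTheory.ofReal_integral_eq_lintegral_ofReal hint]
    filter_upwards [MeasureTheory.ae_restrict_mem measurableSet_Ioc] with u hu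
    exact hnn u hu
  have hmain : ∫⁻ s, ENNReal.ofReal (h s) ∂μ = ENNReal.ofReal ((π - θ)^2/2) := by
    rw [MeasureTheory.lintegral_congr_ae hleft, hswap, hright]
  -- conclude
  have hmeash : Measurable h := by
    apply Measurable.div
    · apply Measurable.sub
      · exact Real.measurable_log.comp (by fun_prop)
      · apply Measurable.div_const
        apply Real.measurable_log.comp
        fun_prop
    · fun_prop
  have hnnh : ∀ s ∈ Ioi (0:ℝ), 0 ≤ h s := by
    intro s hs
    have hs' : (0:ℝ) < s := hs
    rw [hh]
    simp only
    have hq2 : s^2 - 2*s*Real.cos θ + 1 ≤ (s+1)^2 := by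
      nlinarith [Real.neg_one_le_cos θ, hs']
    have hlog2 : Real.log (s^2 - 2*s*Real.cos θ + 1)/2 ≤ Real.log (s+1) := by
      rcases eq_or_lt_of_le (q_nonneg s θ) with h0 | h0
      · rw [← h0, Real.log_zero]
        simp only [zero_div]
        exact Real.log_nonneg (by linarith [hs'.le])
      · have := Real.log_le_log h0 hq2
        rw [Real.log_pow] at this
        push_cast at this
        linarith
    have : 0 ≤ Real.log (s+1) - Real.log (s^2 - 2*s*Real.cos θ + 1)/2 := by linarith
    exact div_nonneg this hs'.le
  have hnnae : 0 ≤ᵐ[μ] h := by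
    filter_upwards [MeasureTheory.ae_restrict_mem measurableSet_Ioi] with s hs
    exact hnnh s hs
  have hintg : IntegrableOn h (Ioi 0) := by
    refine ⟨hmeash.aestronglyMeasurable, ?_⟩
    rw [MeasureTheory.hasFiniteIntegral_iff_norm]
    have : ∫⁻ a, ENNReal.ofReal ‖h a‖ ∂μ = ∫⁻ a, ENNReal.ofReal (h a) ∂μ := by
      apply MeasureTheory.lintegral_congr_ae
      filter_upwards [hnnae] with s hs
      rw [Real.norm_eq_abs, abs_of_nonneg hs]
    show (∫⁻ a, ENNReal.ofReal ‖h a‖ ∂μ) < ⊤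
    rw [this, hmain]
    exact ENNReal.ofReal_lt_top
  constructor
  · exact hintg
  · rw [show (∫ s in Ioi 0, h s) = ∫ s, h s ∂μ from rfl,
      MeasureTheory.integral_eq_lintegral_of_nonneg_ae hnnae hmeash.aestronglyMeasurable,
      hmain, ENNReal.toReal_ofReal (by positivity)]

lemma ae_ne (c : ℝ) : ∀ᵐ (x : ℝ), x ≠ c := by
  rw [MeasureTheory.ae_iff]
  have : {a : ℝ | ¬ a ≠ c} = {c} := by ext a; simp
  rw [this]
  exact Real.volume_singleton

/-- The per-root integrand. -/
noncomputable def phi (z : ℂ) (r : ℝ) : ℝ :=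
  (Real.log (r + Complex.abs z) - Real.log (Complex.abs (↑r - z)))/r

lemma phi_int (z : ℂ) (hz : z ≠ 0) :
    IntegrableOn (phi z) (Ioi 0) ∧
    ∫ r in Ioi 0, phi z r = (π - |Complex.arg z|)^2/2 := by
  set ρ := Complex.abs z with hρdef
  have hρ : 0 < ρ := Complex.abs.pos hz
  set θ := |Complex.arg z| with hθdef
  have hθ0 : 0 ≤ θ := abs_nonneg _
  have hθπ : θ ≤ π := Complex.abs_arg_le_pi z
  have hre : z.re = ρ * Real.cos θ := by
    rw [hθdef, Real.cos_abs, Complex.cos_arg hz]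
    field_simp
    rfl
  have hsq : z.re^2 + z.im^2 = ρ^2 := by
    rw [hρdef, Complex.sq_abs, Complex.normSq_apply]
    ring
  have habs2 : ∀ r : ℝ, (Complex.abs (↑r - z))^2 = r^2 - 2*r*(ρ*Real.cos θ) + ρ^2 := by
    intro r
    have h1 : ((r:ℂ) - z).re = r - z.re := by simp
    have h2 : ((r:ℂ) - z).im = - z.im := by simp
    rw [Complex.sq_abs, Complex.normSq_apply, h1, h2, ← hre]
    nlinarith [hsq]
  have habs : ∀ r : ℝ, 0 < r →
      Complex.abs (↑r - z) = ρ * Real.sqrt ((r/ρ)^2 - 2*(r/ρ)*Real.cos θ + 1) := by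
    intro r hr
    have hq0 : 0 ≤ (r/ρ)^2 - 2*(r/ρ)*Real.cos θ + 1 := q_nonneg _ _
    have hkey : (Complex.abs (↑r - z))^2 = ρ^2 * ((r/ρ)^2 - 2*(r/ρ)*Real.cos θ + 1) := by
      rw [habs2 r]; field_simp
    rw [← Real.sqrt_sq (AbsoluteValue.nonneg Complex.abs _), hkey,
      Real.sqrt_mul (sq_nonneg ρ), Real.sqrt_sq hρ.le]
  set g : ℝ → ℝ := fun s => (Real.log (s+1) - Real.log (s^2 - 2*s*Real.cos θ + 1)/2)/s with hgdef
  have hW := W_int hθ0 hθπ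
  have hinv : (0:ℝ) < 1/ρ := by positivity
  have hcomp : IntegrableOn (fun r => (1/ρ) * g ((1/ρ)*r)) (Ioi 0) := by
    have h1 : IntegrableOn (fun x => g ((1/ρ)*x)) (Ioi 0) := by
      have := (integrableOn_Ioi_comp_mul_left_iff g 0 hinv).mpr
      simp only [mul_zero] at this
      exact this hW.1
    exact h1.const_mul _
  have haeeq : phi z =ᵐ[volume.restrict (Ioi (0:ℝ))] fun r => (1/ρ) * g ((1/ρ)*r) := by
    filter_upwards [MeasureTheory.ae_restrict_mem measurableSet_Ioi,
      MeasureTheory.ae_restrict_of_ae (ae_ne ρ)] with r hr hrρ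
    have hr' : (0:ℝ) < r := hr
    have hs1 : r/ρ ≠ 1 := by
      intro hcon
      apply hrρ
      field_simp at hcon
      exact hcon
    have hqpos : 0 < (r/ρ)^2 - 2*(r/ρ)*Real.cos θ + 1 :=
      q_pos (by positivity) hθ0 hθπ (Or.inr hs1)
    have hsqrtpos : 0 < Real.sqrt ((r/ρ)^2 - 2*(r/ρ)*Real.cos θ + 1) := Real.sqrt_pos.mpr hqpos
    unfold phi
    rw [habs r hr', Real.log_mul hρ.ne' hsqrtpos.ne', Real.log_sqrt hqpos.le]
    rw [hgdef]
    simp only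
    rw [show (1/ρ)*r = r/ρ by ring]
    have hlog : Real.log (r/ρ + 1) = Real.log (r + ρ) - Real.log ρ := by
      rw [show r/ρ + 1 = (r+ρ)/ρ by field_simp, Real.log_div (by positivity) hρ.ne']
    rw [hlog]
    field_simp
    ring
  constructor
  · exact hcomp.congr haeeq.symm
  · rw [MeasureTheory.integral_congr_ae haeeq, MeasureTheory.integral_const_mul,
      integral_comp_mul_left_Ioi g 0 hinv]
    simp only [mul_zero, smul_eq_mul]
    rw [hW.2]
    field_simp

lemma Hf_shift {x : ℝ} (h1 : -(2*π) ≤ x) (h2 : x ≤ 0) :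
    (π - |x + 2*π|)^2/2 = (π - |x|)^2/2 := by
  rw [abs_of_nonneg (by linarith), abs_of_nonpos h2]
  ring

lemma Hf_shift' {x : ℝ} (h1 : 0 ≤ x) (h2 : x ≤ 2*π) :
    (π - |x + (-1:ℤ)*(2*π)|)^2/2 = (π - |x|)^2/2 := by
  rw [show x + (-1:ℤ)*(2*π) = -(2*π - x) by push_cast; ring, abs_neg,
    abs_of_nonneg (by linarith), abs_of_nonneg h1]
  ring

lemma Hval_rot (z : ℂ) (hz : z ≠ 0) (γ : ℝ) (hγ : |γ| ≤ π) :
    (π - |Complex.arg (Complex.exp (↑γ * Complex.I) * z)|)^2/2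
      = (π - |Complex.arg z + γ|)^2/2 := by
  have hπ := Real.pi_pos
  set w := Complex.exp (↑γ * Complex.I) * z with hwdef
  have hw : w ≠ 0 := mul_ne_zero (Complex.exp_ne_zero _) hz
  have habsw : Complex.abs w = Complex.abs z := by
    rw [hwdef, map_mul, Complex.abs_exp_ofReal_mul_I, one_mul]
  have h1 : (↑(Complex.abs z) : ℂ) * Complex.exp (↑(Complex.arg w) * Complex.I) = w := by
    rw [← habsw]; exact Complex.abs_mul_exp_arg_mul_I w
  have h2 : (↑(Complex.abs z) : ℂ) * Complex.exp (↑(Complex.arg z + γ) * Complex.I) = w := by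
    have hz' := Complex.abs_mul_exp_arg_mul_I z
    calc (↑(Complex.abs z) : ℂ) * Complex.exp (↑(Complex.arg z + γ) * Complex.I)
        = Complex.exp (↑γ * Complex.I) * ((↑(Complex.abs z) : ℂ)
            * Complex.exp (↑(Complex.arg z) * Complex.I)) := by
          rw [show ((Complex.arg z + γ : ℝ) : ℂ) * Complex.I
              = ↑γ * Complex.I + ↑(Complex.arg z) * Complex.I by push_cast; ring,
            Complex.exp_add]
          ring
    _ = w := by rw [hz']
  have habsne : (↑(Complex.abs z) : ℂ) ≠ 0 := by
    simpa using Complex.abs.ne_zero hz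
  have hexp : Complex.exp (↑(Complex.arg w) * Complex.I)
      = Complex.exp (↑(Complex.arg z + γ) * Complex.I) :=
    mul_left_cancel₀ habsne (h1.trans h2.symm)
  obtain ⟨n, hn⟩ := Complex.exp_eq_exp_iff_exists_int.mp hexp
  have hre : Complex.arg w = Complex.arg z + γ + n*(2*π) := by
    have h3 : (↑(Complex.arg w) : ℂ) * Complex.I
        = (↑(Complex.arg z + γ) + ↑n * (2*(π:ℝ))) * Complex.I := by
      rw [hn]; push_cast; ring
    have h4 := mul_right_cancel₀ Complex.I_ne_zero h3
    have h5 := congrArg Complex.re h4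
    push_cast at h5 ⊢
    simpa using h5
  have hargw1 := Complex.arg_le_pi w
  have hargw2 := Complex.neg_pi_lt_arg w
  have hargz1 := Complex.arg_le_pi z
  have hargz2 := Complex.neg_pi_lt_arg z
  have hγ1 : -π ≤ γ := by cases abs_le.mp hγ; assumption
  have hγ2 : γ ≤ π := by cases abs_le.mp hγ; assumption
  have e : (n:ℝ)*(2*π) = Complex.arg w - Complex.arg z - γ := by linarith [hre]
  have hn2 : (n:ℝ) < 2 := by nlinarith
  have hn2' : (-2:ℝ) < (n:ℝ) := by nlinarith
  have hn3 : n < 2 := by exact_mod_cast hn2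
  have hn4 : -2 < n := by exact_mod_cast hn2'
  interval_cases n
  · rw [hre]
    push_cast at hre
    exact Hf_shift' (by linarith) (by linarith)
  · rw [hre]; norm_num
  · rw [hre]
    rw [show Complex.arg z + γ + (1:ℤ)*(2*π) = (Complex.arg z + γ) + 2*π by push_cast; ring]
    exact Hf_shift (by linarith) (by push_cast at hre; linarith)

lemma ae_ne_list (l : List ℂ) : ∀ᵐ (r : ℝ), ∀ z ∈ l, r ≠ Complex.abs z := by
  induction l with
  | nil => simp
  | cons a t ih =>
    filter_upwards [ih, ae_ne (Complex.abs a)] with r h1 h2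
    intro z hz
    rcases List.mem_cons.mp hz with h | h
    · rw [h]; exact h2
    · exact h1 z h

lemma list_log_prod (l : List ℝ) (h : ∀ x ∈ l, 0 < x) :
    Real.log l.prod = (l.map Real.log).sum := by
  induction l with
  | nil => simp
  | cons a t ih =>
    simp only [List.prod_cons, List.map_cons, List.sum_cons]
    rw [Real.log_mul (h a (List.mem_cons_self)).ne'
      (List.prod_pos (fun x hx => h x (List.mem_cons_of_mem a hx))).ne',
      ih (fun x hx => h x (List.mem_cons_of_mem a hx))]

lemma integral_list (l : List ℂ) (F : ℂ → ℝ → ℝ)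
    (h : ∀ z ∈ l, IntegrableOn (F z) (Ioi 0)) :
    IntegrableOn (fun r => (l.map (fun z => F z r)).sum) (Ioi 0) ∧
    ∫ r in Ioi 0, (l.map (fun z => F z r)).sum
      = (l.map (fun z => ∫ r in Ioi 0, F z r)).sum := by
  induction l with
  | nil =>
    constructor
    · simp only [List.map_nil, List.sum_nil]
      exact integrable_zero _ _ _
    · simp
  | cons a t ih =>
    have ha := h a (List.mem_cons_self)
    obtain ⟨iht, et⟩ := ih (fun z hz => h z (List.mem_cons_of_mem a hz))
    constructor
    · exact ha.add iht
    · simp only [List.map_cons, List.sum_cons]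
      rw [MeasureTheory.integral_add ha iht, et]

lemma list_sum_le {l : List ℂ} {f g : ℂ → ℝ} (h : ∀ z ∈ l, f z ≤ g z) :
    (l.map f).sum ≤ (l.map g).sum := by
  induction l with
  | nil => simp
  | cons a t ih =>
    simp only [List.map_cons, List.sum_cons]
    exact add_le_add (h a (List.mem_cons_self))
      (ih (fun z hz => h z (List.mem_cons_of_mem a hz)))

lemma list_sum_comb (l : List ℂ) (a b c : ℂ → ℝ) :
    (l.map (fun z => a z + b z - 2 * c z)).sum
      = (l.map a).sum + (l.map b).sum - 2*(l.map c).sum := by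
  induction l with
  | nil => simp
  | cons x t ih =>
    simp only [List.map_cons, List.sum_cons, ih]
    ring

lemma list_sum_div (l : List ℂ) (u : ℂ → ℝ) (r : ℝ) :
    (l.map (fun z => u z / r)).sum = (l.map u).sum / r := by
  induction l with
  | nil => simp
  | cons x t ih =>
    simp only [List.map_cons, List.sum_cons, ih]
    ring

lemma list_sum_sub (l : List ℂ) (u v : ℂ → ℝ) :
    (l.map (fun z => u z - v z)).sum = (l.map u).sum - (l.map v).sum := by
  induction l with
  | nil => simp
  | cons x t ih =>
    simp only [List.map_cons, List.sum_cons, ih]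
    ring

lemma list_sum_cnt (l : List ℂ) (p : ℂ → Prop) [DecidablePred p] (b c : ℝ) :
    (l.map (fun z => b - c * (if p z then (1:ℝ) else 0))).sum
      = l.length * b - c * (l.filter (fun z => decide (p z))).length := by
  induction l with
  | nil => simp
  | cons x t ih =>
    simp only [List.map_cons, List.sum_cons, ih, List.filter_cons]
    by_cases hx : p x
    · rw [if_pos hx, if_pos (by simpa using hx)]
      push_cast [List.length_cons]
      ring
    · rw [if_neg hx, if_neg (by simpa using hx)]
      push_cast [List.length_cons]
      ring

end Obre

set_option maxHeartbeats 1000000 in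
open Obre Real Set MeasureTheory in
open Classical in
/-- Obrechkoff's inequality for polynomials with nonnegative real coefficients. -/
theorem obrechkoff (f : Polynomial ℝ) (hdeg : 0 < f.natDegree)
    (hcoeff : ∀ k, 0 ≤ f.coeff k) (α : ℝ) (hα : 0 ≤ α) (hα' : α ≤ Real.pi / 2) :
    ((((f.map (algebraMap ℝ ℂ)).roots.filter
        (fun z => z ≠ 0 ∧ |Complex.arg z| ≤ α)).card : ℝ)) ≤
      (2 * α / Real.pi) *
        (((f.map (algebraMap ℝ ℂ)).roots.filter (fun z => z ≠ 0)).card : ℝ) := by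
  have hπ := Real.pi_pos
  set P := f.map (algebraMap ℝ ℂ) with hPdef
  have hf0 : f ≠ 0 := fun h => by simp [h] at hdeg
  have hP0 : P ≠ 0 := Polynomial.map_ne_zero hf0
  have hlc : P.leadingCoeff ≠ 0 := Polynomial.leadingCoeff_ne_zero.mpr hP0
  have hdeg' : P.natDegree = f.natDegree := by
    rw [hPdef]; exact Polynomial.natDegree_map _
  have hevalr : ∀ r : ℝ, P.eval (r : ℂ) = ((f.eval r : ℝ) : ℂ) := by
    intro r
    rw [hPdef, Polynomial.eval_map]
    exact Polynomial.eval₂_at_apply (algebraMap ℝ ℂ) r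
  have hfr : ∀ r : ℝ, 0 < r → 0 < f.eval r := by
    intro r hr
    have h1 := Polynomial.eval_eq_sum_range (p := f) r
    have h2 : f.coeff f.natDegree * r^(f.natDegree)
        ≤ ∑ i ∈ Finset.range (f.natDegree+1), f.coeff i * r^i :=
      Finset.single_le_sum (fun i _ => mul_nonneg (hcoeff i) (by positivity))
        (Finset.self_mem_range_succ _)
    have h3 : 0 < f.coeff f.natDegree * r^(f.natDegree) := by
      have : 0 < f.coeff f.natDegree := by
        rcases (hcoeff f.natDegree).eq_or_lt with h | h
        · exact absurd h.symm
            (by rw [Polynomial.coeff_natDegree]; exact Polynomial.leadingCoeff_ne_zero.mpr hf0)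
        · exact h
      positivity
    rw [h1]
    exact h3.trans_le h2
  have hnoposroot : ∀ z ∈ P.roots, ∀ r : ℝ, 0 < r → (r:ℂ) ≠ z := by
    intro z hz r hr hcon
    have h0 : P.eval z = 0 := (Polynomial.mem_roots hP0).mp hz
    rw [← hcon, hevalr] at h0
    exact (hfr r hr).ne' (by exact_mod_cast h0)
  have hbound : ∀ (r : ℝ), 0 < r → ∀ ξ : ℂ, Complex.abs ξ = r →
      Complex.abs (P.eval ξ) ≤ Complex.abs (P.eval (r:ℂ)) := by
    intro r hr ξ hξ
    rw [hevalr, Complex.abs_ofReal, abs_of_pos (hfr r hr)]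
    calc Complex.abs (P.eval ξ)
        = Complex.abs (∑ i ∈ Finset.range (P.natDegree+1), P.coeff i * ξ^i) := by
          rw [← Polynomial.eval_eq_sum_range]
    _ ≤ ∑ i ∈ Finset.range (P.natDegree+1), Complex.abs (P.coeff i * ξ^i) :=
          Complex.abs.sum_le _ _
    _ = ∑ i ∈ Finset.range (f.natDegree+1), f.coeff i * r^i := by
          refine Finset.sum_congr (by rw [hdeg']) (fun i _ => ?_)
          rw [map_mul, map_pow, hξ, hPdef, Polynomial.coeff_map]
          have he : Complex.abs ((algebraMap ℝ ℂ) (f.coeff i)) = f.coeff i := by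
            rw [show (algebraMap ℝ ℂ) (f.coeff i) = ((f.coeff i : ℝ) : ℂ) from rfl,
              Complex.abs_ofReal, abs_of_nonneg (hcoeff i)]
          rw [he]
    _ = f.eval r := (Polynomial.eval_eq_sum_range (p := f) r).symm
  have hsplit : P = Polynomial.C P.leadingCoeff
      * (P.roots.map (fun a => Polynomial.X - Polynomial.C a)).prod :=
    (IsAlgClosed.splits P).eq_prod_roots
  have heval : ∀ ξ : ℂ, Complex.abs (P.eval ξ)
      = Complex.abs P.leadingCoeff * ((P.roots.map (fun z => Complex.abs (ξ - z))).prod) := by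
    intro ξ
    have h1 : P.eval ξ = P.leadingCoeff * ((P.roots.map (fun z => ξ - z)).prod) := by
      conv_lhs => rw [hsplit]
      rw [Polynomial.eval_mul, Polynomial.eval_C, Polynomial.eval_multiset_prod,
        Multiset.map_map]
      congr 2
      apply Multiset.map_congr rfl
      intro a _
      simp
    rw [h1, map_mul, map_multiset_prod, Multiset.map_map]
    rfl
  set S := P.roots.filter (fun z => z ≠ 0) with hSdef
  set l := S.toList with hldef
  have hlmem : ∀ z ∈ l, z ∈ P.roots ∧ z ≠ 0 := by
    intro z hz
    rw [hldef, Multiset.mem_toList, hSdef, Multiset.mem_filter] at hz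
    exact hz
  have hrne : ∀ (r : ℝ), 0 < r → ∀ z ∈ l, (r:ℂ) ≠ z :=
    fun r hr z hz => hnoposroot z (hlmem z hz).1 r hr
  have hcoeS : (↑l : Multiset ℂ) = S := Multiset.coe_toList S
  -- the fundamental product inequality
  have hprod : ∀ (γ r : ℝ), 0 < r →
      (l.map (fun z => Complex.abs ((r:ℂ) - Complex.exp (↑γ*Complex.I)*z))).prod
        ≤ (l.map (fun z => Complex.abs ((r:ℂ) - z))).prod := by
    intro γ r hr
    set w := Complex.exp (↑γ*Complex.I) with hwdef
    have hw1 : Complex.abs w = 1 := Complex.abs_exp_ofReal_mul_I γ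
    set ξ := (r:ℂ) * Complex.exp (↑(-γ)*Complex.I) with hξdef
    have hξabs : Complex.abs ξ = r := by
      rw [hξdef, map_mul, Complex.abs_ofReal, Complex.abs_exp_ofReal_mul_I,
        abs_of_pos hr, mul_one]
    have hwξ : w * ξ = (r:ℂ) := by
      rw [hwdef, hξdef, show Complex.exp (↑γ*Complex.I) * ((r:ℂ) * Complex.exp (↑(-γ)*Complex.I))
          = (r:ℂ) * (Complex.exp (↑γ*Complex.I) * Complex.exp (↑(-γ)*Complex.I)) by ring,
        ← Complex.exp_add]
      norm_num
    have hfac : ∀ z : ℂ, Complex.abs ((r:ℂ) - w*z) = Complex.abs (ξ - z) := by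
      intro z
      calc Complex.abs ((r:ℂ) - w*z) = Complex.abs (w * (ξ - z)) := by
            rw [mul_sub, hwξ]
      _ = Complex.abs (ξ - z) := by rw [map_mul, hw1, one_mul]
    have hsplit2 : S + P.roots.filter (fun z => ¬ z ≠ 0) = P.roots := by
      rw [hSdef]; exact Multiset.filter_add_not _ _
    set m := Multiset.card (P.roots.filter (fun z => ¬ z ≠ 0)) with hmdef
    have hzeros : ∀ g : ℂ → ℝ, g 0 = r →
        ((P.roots.filter (fun z => ¬ z ≠ 0)).map g).prod = r ^ m := by
      intro g hg
      rw [show (P.roots.filter (fun z => ¬ z ≠ 0)).map g = Multiset.replicate m r from ?_,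
        Multiset.prod_replicate]
      rw [Multiset.eq_replicate]
      refine ⟨by rw [Multiset.card_map], fun b hb => ?_⟩
      obtain ⟨z, hz, rfl⟩ := Multiset.mem_map.mp hb
      have hz0 : z = 0 := by
        have := (Multiset.mem_filter.mp hz).2
        tauto
      rw [hz0, hg]
    have habs0ξ : Complex.abs (ξ - 0) = r := by rw [sub_zero, hξabs]
    have habs0r : Complex.abs ((r:ℂ) - 0) = r := by
      rw [sub_zero, Complex.abs_ofReal, abs_of_pos hr]
    have hkey := hbound r hr ξ hξabs
    rw [heval ξ, heval ((r:ℂ)), ← hsplit2, Multiset.map_add, Multiset.map_add,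
      Multiset.prod_add, Multiset.prod_add, hzeros _ habs0ξ, hzeros _ habs0r] at hkey
    have hlcpos' : 0 < Complex.abs P.leadingCoeff := Complex.abs.pos hlc
    have hrpow : (0:ℝ) < r ^ m := by positivity
    have hSprod : (S.map (fun z => Complex.abs (ξ - z))).prod
        ≤ (S.map (fun z => Complex.abs ((r:ℂ) - z))).prod := by
      have h1 : (S.map (fun z => Complex.abs (ξ - z))).prod * r ^ m
          ≤ (S.map (fun z => Complex.abs ((r:ℂ) - z))).prod * r ^ m :=
        le_of_mul_le_mul_left hkey hlcpos'
      exact le_of_mul_le_mul_right h1 hrpow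
    have hconv : ∀ g : ℂ → ℝ, (S.map g).prod = (l.map g).prod := by
      intro g
      rw [← hcoeS, Multiset.map_coe, Multiset.prod_coe]
    calc (l.map (fun z => Complex.abs ((r:ℂ) - w*z))).prod
        = (l.map (fun z => Complex.abs (ξ - z))).prod := by
          rw [List.map_congr_left (fun z _ => hfac z)]
    _ = (S.map (fun z => Complex.abs (ξ - z))).prod := (hconv _).symm
    _ ≤ (S.map (fun z => Complex.abs ((r:ℂ) - z))).prod := hSprod
    _ = (l.map (fun z => Complex.abs ((r:ℂ) - z))).prod := hconv _
  -- the log-sum inequality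
  have hsum : ∀ γ : ℝ, ∀ r : ℝ, 0 < r → (∀ z ∈ l, r ≠ Complex.abs z) →
      (l.map (fun z => Real.log (Complex.abs ((r:ℂ) - Complex.exp (↑γ*Complex.I)*z)))).sum
        ≤ (l.map (fun z => Real.log (Complex.abs ((r:ℂ) - z)))).sum := by
    intro γ r hr hbad
    have hposR : ∀ x ∈ l.map (fun z => Complex.abs ((r:ℂ) - z)), 0 < x := by
      intro x hx
      obtain ⟨z, hz, rfl⟩ := List.mem_map.mp hx
      exact Complex.abs.pos (sub_ne_zero.mpr (hrne r hr z hz))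
    have hposL : ∀ x ∈ l.map (fun z =>
        Complex.abs ((r:ℂ) - Complex.exp (↑γ*Complex.I)*z)), 0 < x := by
      intro x hx
      obtain ⟨z, hz, rfl⟩ := List.mem_map.mp hx
      apply Complex.abs.pos
      intro hcon
      rw [sub_eq_zero] at hcon
      apply hbad z hz
      have h5 := congrArg Complex.abs hcon
      rwa [Complex.abs_ofReal, abs_of_pos hr, map_mul, Complex.abs_exp_ofReal_mul_I,
        one_mul] at h5
    have e1 : (l.map (fun z =>
        Real.log (Complex.abs ((r:ℂ) - Complex.exp (↑γ*Complex.I)*z)))).sum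
        = Real.log ((l.map (fun z =>
            Complex.abs ((r:ℂ) - Complex.exp (↑γ*Complex.I)*z))).prod) := by
      rw [list_log_prod _ hposL, List.map_map]
      rfl
    have e2 : (l.map (fun z => Real.log (Complex.abs ((r:ℂ) - z)))).sum
        = Real.log ((l.map (fun z => Complex.abs ((r:ℂ) - z))).prod) := by
      rw [list_log_prod _ hposR, List.map_map]
      rfl
    rw [e1, e2]
    exact Real.log_le_log (List.prod_pos hposL) (hprod γ r hr)
  -- case split on α
  rcases eq_or_lt_of_le hα with hα0 | hαpos
  · -- α = 0 : no roots on the positive real axis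
    have hemp : P.roots.filter (fun z => z ≠ 0 ∧ |Complex.arg z| ≤ α) = 0 := by
      rw [Multiset.filter_eq_nil]
      rintro z hz ⟨hz0, harg⟩
      have harg0 : Complex.arg z = 0 :=
        abs_eq_zero.mp (le_antisymm (by rwa [← hα0] at harg) (abs_nonneg _))
      have hzeq : ((Complex.abs z : ℝ) : ℂ) = z := by
        have := Complex.abs_mul_exp_arg_mul_I z
        rwa [harg0, Complex.ofReal_zero, zero_mul, Complex.exp_zero, mul_one] at this
      exact hnoposroot z hz (Complex.abs z) (Complex.abs.pos hz0) hzeq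
    rw [hemp]
    rw [← hα0]
    simp
  · -- main case : 0 < α
    set β := 2*α with hβdef
    have hβpos : 0 < β := by linarith
    have hβπ : β ≤ π := by linarith
    set wp := Complex.exp ((β:ℂ)*Complex.I) with hwpdef
    set wm := Complex.exp ((↑(-β):ℂ)*Complex.I) with hwmdef
    have hGint : ∀ z ∈ l,
        IntegrableOn (fun r => phi (wp*z) r + phi (wm*z) r - 2*phi z r) (Ioi 0) ∧
        ∫ r in Ioi 0, (phi (wp*z) r + phi (wm*z) r - 2*phi z r)
          = (π - |Complex.arg z + β|)^2/2 + (π - |Complex.arg z + (-β)|)^2/2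
            - 2*((π - |Complex.arg z|)^2/2) := by
      intro z hz
      have hz0 := (hlmem z hz).2
      have hp := phi_int (wp*z) (mul_ne_zero (Complex.exp_ne_zero _) hz0)
      have hm := phi_int (wm*z) (mul_ne_zero (Complex.exp_ne_zero _) hz0)
      have h0 := phi_int z hz0
      have hint1 : IntegrableOn (fun r => phi (wp*z) r + phi (wm*z) r) (Ioi 0) :=
        hp.1.add hm.1
      have hint2 : IntegrableOn (fun r => 2 * phi z r) (Ioi 0) := h0.1.const_mul 2
      refine ⟨hint1.sub hint2, ?_⟩
      rw [MeasureTheory.integral_sub hint1 hint2,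
        MeasureTheory.integral_add hp.1 hm.1, MeasureTheory.integral_const_mul,
        hp.2, hm.2, h0.2]
      rw [hwpdef, hwmdef] at *
      rw [Hval_rot z hz0 β (by rw [abs_of_pos hβpos]; exact hβπ),
        Hval_rot z hz0 (-β) (by rw [abs_neg, abs_of_pos hβpos]; exact hβπ)]
    have hΦ := integral_list l _ (fun z hz => (hGint z hz).1)
    have hΦnn : 0 ≤ ∫ r in Ioi 0,
        (l.map (fun z => phi (wp*z) r + phi (wm*z) r - 2*phi z r)).sum := by
      apply MeasureTheory.integral_nonneg_of_ae
      filter_upwards [MeasureTheory.ae_restrict_mem measurableSet_Ioi,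
        MeasureTheory.ae_restrict_of_ae (ae_ne_list l)] with r hr hbad
      have hr' : (0:ℝ) < r := hr
      have hphiw : ∀ (w : ℂ), Complex.abs w = 1 →
          (l.map (fun z => phi (w*z) r)).sum
          = ((l.map (fun z => Real.log (r + Complex.abs z))).sum
            - (l.map (fun z => Real.log (Complex.abs ((r:ℂ) - w*z)))).sum) / r := by
        intro w hw
        have hpt : ∀ z ∈ l, phi (w*z) r
            = (fun z => (Real.log (r + Complex.abs z)
              - Real.log (Complex.abs ((r:ℂ) - w*z))) / r) z := by
          intro z _
          unfold Obre.phi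
          rw [map_mul, hw, one_mul]
        rw [List.map_congr_left hpt,
          list_sum_div l (fun z => Real.log (r + Complex.abs z)
            - Real.log (Complex.abs ((r:ℂ) - w*z))) r,
          list_sum_sub]
      have hphi0 : (l.map (fun z => phi z r)).sum
          = ((l.map (fun z => Real.log (r + Complex.abs z))).sum
            - (l.map (fun z => Real.log (Complex.abs ((r:ℂ) - z)))).sum) / r := by
        have hpt : ∀ z ∈ l, phi z r
            = (fun z => (Real.log (r + Complex.abs z)
              - Real.log (Complex.abs ((r:ℂ) - z))) / r) z := fun z _ => rfl
        rw [List.map_congr_left hpt,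
          list_sum_div l (fun z => Real.log (r + Complex.abs z)
            - Real.log (Complex.abs ((r:ℂ) - z))) r,
          list_sum_sub]
      simp only [Pi.zero_apply]
      rw [list_sum_comb l (fun z => phi (wp*z) r) (fun z => phi (wm*z) r) (fun z => phi z r),
        hphiw wp (by rw [hwpdef]; exact Complex.abs_exp_ofReal_mul_I β),
        hphiw wm (by rw [hwmdef]; exact Complex.abs_exp_ofReal_mul_I (-β)),
        hphi0]
      have hB := hsum β r hr' hbad
      have hC := hsum (-β) r hr' hbad
      rw [← hwpdef] at hB
      rw [← hwmdef] at hC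
      set A := (l.map (fun z => Real.log (r + Complex.abs z))).sum
      set B := (l.map (fun z => Real.log (Complex.abs ((r:ℂ) - wp*z)))).sum
      set C := (l.map (fun z => Real.log (Complex.abs ((r:ℂ) - wm*z)))).sum
      set D := (l.map (fun z => Real.log (Complex.abs ((r:ℂ) - z)))).sum
      have hid : (A - B)/r + (A - C)/r - 2*((A - D)/r) = ((D - B) + (D - C))/r := by
        ring
      rw [hid]
      apply div_nonneg _ hr'.le
      linarith
    have hsumG : 0 ≤ (l.map (fun z => (π - |Complex.arg z + β|)^2/2
        + (π - |Complex.arg z + (-β)|)^2/2 - 2*((π - |Complex.arg z|)^2/2))).sum := by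
      have h1 := hΦnn
      rw [hΦ.2] at h1
      rwa [List.map_congr_left (fun z hz => (hGint z hz).2)] at h1
    -- pointwise estimate
    have hptwise : ∀ z ∈ l, (π - |Complex.arg z + β|)^2/2
        + (π - |Complex.arg z + (-β)|)^2/2 - 2*((π - |Complex.arg z|)^2/2)
        ≤ β^2 - 2*π*α * (if |Complex.arg z| ≤ α then (1:ℝ) else 0) := by
      intro z hz
      set θ := Complex.arg z with hθdef
      have hθπ' : |θ| ≤ π := Complex.abs_arg_le_pi z
      have habs2 : |θ|^2 = θ^2 := sq_abs θ
      by_cases hif : |θ| ≤ α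
      · rw [if_pos hif]
        rcases abs_le.mp hif with ⟨hm1, hm2⟩
        rw [abs_of_nonneg (by simp only [hβdef]; linarith : (0:ℝ) ≤ θ + β),
          abs_of_nonpos (by simp only [hβdef]; linarith : θ + (-β) ≤ 0)]
        nlinarith [abs_nonneg θ, hif, hπ]
      · rw [if_neg hif]
        push_neg at hif
        rcases le_or_gt β |θ| with hc | hc
        · rcases le_or_gt 0 θ with hs | hs
          · rw [abs_of_nonneg hs] at hc habs2 hθπ'
            rw [abs_of_nonneg hs, abs_of_nonneg (by linarith : (0:ℝ) ≤ θ + β),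
              abs_of_nonneg (by linarith : (0:ℝ) ≤ θ + (-β))]
            nlinarith
          · rw [abs_of_neg hs] at hc habs2 hθπ'
            rw [abs_of_neg hs, abs_of_nonpos (by linarith : θ + β ≤ 0),
              abs_of_nonpos (by linarith : θ + (-β) ≤ 0)]
            nlinarith
        · rcases le_or_gt 0 θ with hs | hs
          · rw [abs_of_nonneg hs] at hc habs2 hθπ' hif
            rw [abs_of_nonneg hs, abs_of_nonneg (by linarith : (0:ℝ) ≤ θ + β),
              abs_of_nonpos (by linarith : θ + (-β) ≤ 0)]
            nlinarith
          · rw [abs_of_neg hs] at hc habs2 hθπ' hif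
            rw [abs_of_neg hs, abs_of_nonneg (by linarith : (0:ℝ) ≤ θ + β),
              abs_of_nonpos (by linarith : θ + (-β) ≤ 0)]
            nlinarith
    have hchain : 0 ≤ (l.length : ℝ) * β^2
        - 2*π*α * ((l.filter (fun z => decide (|Complex.arg z| ≤ α))).length) := by
      have h2 := list_sum_le hptwise
      rw [list_sum_cnt l (fun z => |Complex.arg z| ≤ α) (β^2) (2*π*α)] at h2
      linarith [hsumG.trans h2]
    -- identify the counts
    have hcount1 : ((P.roots.filter (fun z => z ≠ 0 ∧ |Complex.arg z| ≤ α)).card : ℝ)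
        = ((l.filter (fun z => decide (|Complex.arg z| ≤ α))).length : ℝ) := by
      have e1 : P.roots.filter (fun z => z ≠ 0 ∧ |Complex.arg z| ≤ α)
          = S.filter (fun z => |Complex.arg z| ≤ α) := by
        rw [hSdef, Multiset.filter_filter]
        exact Multiset.filter_congr (fun x _ => by tauto)
      rw [e1, ← hcoeS, Multiset.filter_coe, Multiset.coe_card]
    have hcount2 : ((P.roots.filter (fun z => z ≠ 0)).card : ℝ) = (l.length : ℝ) := by
      rw [← hSdef, ← Multiset.length_toList S, ← hldef]
    rw [hcount1, hcount2]
    rw [div_mul_eq_mul_div, le_div_iff₀ hπ]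
    have h2α : (0:ℝ) < 2*α := by linarith
    have hfin : ∀ c n : ℝ, 0 ≤ n*β^2 - 2*π*α*c → c * π ≤ 2*α * n := by
      intro c n hh
      have hβ2 : n*β^2 - 2*π*α*c = 2*α*(2*α*n - c*π) := by rw [hβdef]; ring
      rw [hβ2] at hh
      have h4 : (0:ℝ) ≤ 2*α*n - c*π :=
        le_of_mul_le_mul_left (by simpa using hh) h2α
      linarith
    exact hfin _ _ hchain
end
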